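/- Let (S_1,…,S_d) be a Cuntz family on a complex Hilbert space H and Ω a unit vector such that the linear span of {S_I S_J* Ω : I, J finite multi-indices} is dense in H. Let K be the closure of the linear span of {S_I* Ω : I a finite multi-index}, P the orthogonal projection onto K, and v_k = P S_k P (as operators on K). Then: (a) the vectors {v_I* Ω : I a finite multi-index} are total in K; (b) Σ_{k=1}^d v_k v_k* equals the identity of K; (c) S_k* P = P S_k* P for all k; (d) ⟨Ω, S_I S_J* Ω⟩ = ⟨Ω, v_I v_J* Ω⟩ for all finite multi-indices I, J, and the vectors {S_I ξ : ξ ∈ K, I a finite multi-index} are total in H. -/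

import Mathlib

open ContinuousLinearMap Filter
open scoped ComplexInnerProductSpace ComplexOrder

noncomputable section

/-- The operator `S_I = S_{i₁} ⋯ S_{i_m}` associated to a finite multi-index
(the empty multi-index gives the identity). -/
def cword {d : ℕ} {H : Type*} [NormedAddCommGroup H] [InnerProductSpace ℂ H]
    (S : Fin d → H →L[ℂ] H) (I : List (Fin d)) : H →L[ℂ] H :=
  (I.map S).prod

/-- A Cuntz family: `Sᵢ* Sⱼ = δᵢⱼ 1` and `∑ₖ Sₖ Sₖ* = 1`. -/
def IsCuntzFamily {d : ℕ} {H : Type*} [NormedAddCommGroup H] [InnerProductSpace ℂ H]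
    [CompleteSpace H] (S : Fin d → H →L[ℂ] H) : Prop :=
  (∀ i j : Fin d, adjoint (S i) ∘L S j = if i = j then 1 else 0) ∧
    ∑ k : Fin d, S k ∘L adjoint (S k) = 1

lemma cword_nil {d : ℕ} {H : Type*} [NormedAddCommGroup H] [InnerProductSpace ℂ H]
    (S : Fin d → H →L[ℂ] H) : cword S [] = 1 := rfl

lemma cword_cons {d : ℕ} {H : Type*} [NormedAddCommGroup H] [InnerProductSpace ℂ H]
    (S : Fin d → H →L[ℂ] H) (i : Fin d) (I : List (Fin d)) :
    cword S (i :: I) = S i ∘L cword S I := by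
  simp [cword, List.prod_cons, ContinuousLinearMap.mul_def]

lemma cword_append {d : ℕ} {H : Type*} [NormedAddCommGroup H] [InnerProductSpace ℂ H]
    (S : Fin d → H →L[ℂ] H) (I J : List (Fin d)) :
    cword S (I ++ J) = cword S I ∘L cword S J := by
  simp [cword, List.prod_append, ContinuousLinearMap.mul_def]

lemma adj_one {H : Type*} [NormedAddCommGroup H] [InnerProductSpace ℂ H] [CompleteSpace H] :
    adjoint (1 : H →L[ℂ] H) = 1 := by
  rw [ContinuousLinearMap.one_def, adjoint_id]

/-- Let `S` be a Cuntz family on `H` with a cyclic unit vector `Ω`, let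
`K` be the closed span of `{S_I* Ω}` with orthogonal projection `P`, and `vₖ = P Sₖ P`
(the compressions, viewed as operators supported on `K`). Then `{v_I* Ω}` is total in `K`,
`∑ₖ vₖ vₖ*` is the identity of `K` (namely `P`), `Sₖ* P = P Sₖ* P`, the correlation
functions of `S` and `v` at `Ω` agree, and `{S_I ξ : ξ ∈ K}` is total in `H`. -/
theorem compression_popescu_system_of_cuntz {d : ℕ} (hd : 2 ≤ d)
    {H : Type*} [NormedAddCommGroup H] [InnerProductSpace ℂ H] [CompleteSpace H]
    (S : Fin d → H →L[ℂ] H) (hS : IsCuntzFamily S)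
    (Ω : H) (hΩ : ‖Ω‖ = 1)
    (hcyc : Dense ((Submodule.span ℂ
        {x : H | ∃ I J : List (Fin d), x = cword S I (adjoint (cword S J) Ω)} :
        Submodule ℂ H) : Set H))
    (Ksub : Submodule ℂ H)
    (hKsub : Ksub = (Submodule.span ℂ
        {x : H | ∃ I : List (Fin d), x = adjoint (cword S I) Ω}).topologicalClosure)
    -- `P` is the orthogonal projection of `H` onto `K`
    (P : H →L[ℂ] H) (hP1 : IsSelfAdjoint P) (hP2 : ∀ x : H, P x ∈ Ksub)
    (hP3 : ∀ x ∈ Ksub, P x = x)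
    (v : Fin d → H →L[ℂ] H) (hv : ∀ k, v k = P ∘L S k ∘L P) :
    -- (a) the vectors `v_I* Ω` are total in `K`
    ((Submodule.span ℂ
        {x : H | ∃ I : List (Fin d), x = adjoint (cword v I) Ω}).topologicalClosure = Ksub) ∧
    -- (b) `∑ₖ vₖ vₖ*` is the identity of `K`
    (∑ k : Fin d, v k ∘L adjoint (v k)) = P ∧
    -- (c)
    (∀ k, adjoint (S k) ∘L P = P ∘L adjoint (S k) ∘L P) ∧
    -- (d) matching correlation functions and totality of `{S_I ξ : ξ ∈ K}` in `H`
    (∀ I J : List (Fin d),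
      ⟪Ω, cword S I (adjoint (cword S J) Ω)⟫ = ⟪Ω, cword v I (adjoint (cword v J) Ω)⟫) ∧
    Dense ((Submodule.span ℂ
        {x : H | ∃ (I : List (Fin d)) (ξ : H), ξ ∈ Ksub ∧ x = cword S I ξ} :
        Submodule ℂ H) : Set H) := by
  -- Ksub is closed
  have hKclosed : IsClosed (Ksub : Set H) := by
    rw [hKsub]; exact Submodule.isClosed_topologicalClosure _
  -- generators belong to Ksub
  have hgen : ∀ I : List (Fin d), adjoint (cword S I) Ω ∈ Ksub := by
    intro I
    rw [hKsub]
    exact Submodule.le_topologicalClosure _ (Submodule.subset_span ⟨I, rfl⟩)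
  have hΩK : Ω ∈ Ksub := by
    have := hgen []
    simpa [cword_nil, adj_one] using this
  -- S_k* leaves Ksub invariant
  have hinv : ∀ (k : Fin d) (x : H), x ∈ Ksub → adjoint (S k) x ∈ Ksub := by
    intro k x hx
    have hle : (Submodule.span ℂ
        {x : H | ∃ I : List (Fin d), x = adjoint (cword S I) Ω}).topologicalClosure
        ≤ Submodule.comap (adjoint (S k) : H →ₗ[ℂ] H) Ksub := by
      apply Submodule.topologicalClosure_minimal
      · rw [Submodule.span_le]
        rintro y ⟨I, rfl⟩
        show adjoint (S k) (adjoint (cword S I) Ω) ∈ Ksub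
        have : adjoint (S k) (adjoint (cword S I) Ω)
            = adjoint (cword S (I ++ [k])) Ω := by
          rw [cword_append, adjoint_comp]
          simp [cword_cons, cword_nil, adjoint_comp, adj_one]
        rw [this]; exact hgen _
      · exact (hKclosed.preimage (adjoint (S k)).continuous)
    have hx' : x ∈ (Submodule.span ℂ
        {x : H | ∃ I : List (Fin d), x = adjoint (cword S I) Ω}).topologicalClosure := by
      rwa [← hKsub]
    exact hle hx'
  -- (c)
  have hc : ∀ k, adjoint (S k) ∘L P = P ∘L adjoint (S k) ∘L P := by
    intro k
    ext x
    exact (hP3 _ (hinv k (P x) (hP2 x))).symm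
  -- pointwise form of (c)
  have hc' : ∀ (k : Fin d) (x : H), x ∈ Ksub → P (adjoint (S k) x) = adjoint (S k) x :=
    fun k x hx => hP3 _ (hinv k x hx)
  -- adjoint of v k
  have hvadj : ∀ k, adjoint (v k) = adjoint (S k) ∘L P := by
    intro k
    rw [hv k, adjoint_comp, adjoint_comp, hP1.adjoint_eq]
    ext x
    simp only [comp_apply]
    rw [hc' k (P x) (hP2 x)]
  -- v_I* x = S_I* x for x ∈ Ksub, and it stays in Ksub
  have key : ∀ (I : List (Fin d)) (x : H), x ∈ Ksub →
      adjoint (cword v I) x = adjoint (cword S I) x ∧ adjoint (cword S I) x ∈ Ksub := by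
    intro I
    induction I with
    | nil => intro x hx; simpa [cword_nil, adj_one] using hx
    | cons i I ih =>
        intro x hx
        have h1 : adjoint (v i) x = adjoint (S i) x := by
          rw [hvadj i]; simp only [comp_apply]; rw [hP3 x hx]
        have h2 : adjoint (S i) x ∈ Ksub := hinv i x hx
        have := ih (adjoint (S i) x) h2
        constructor
        · rw [cword_cons, cword_cons, adjoint_comp, adjoint_comp]
          simp only [comp_apply]
          rw [h1, this.1]
        · rw [cword_cons, adjoint_comp]
          simpa only [comp_apply] using this.2
  -- (a)
  have ha : (Submodule.span ℂ
      {x : H | ∃ I : List (Fin d), x = adjoint (cword v I) Ω}).topologicalClosure = Ksub := by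
    have hsets : {x : H | ∃ I : List (Fin d), x = adjoint (cword v I) Ω}
        = {x : H | ∃ I : List (Fin d), x = adjoint (cword S I) Ω} := by
      ext x
      constructor <;> rintro ⟨I, rfl⟩ <;> exact ⟨I, by rw [(key I Ω hΩK).1]⟩
    rw [hsets, ← hKsub]
  -- (b)
  have hb : (∑ k : Fin d, v k ∘L adjoint (v k)) = P := by
    ext x
    have h1 : ∀ k : Fin d, (v k ∘L adjoint (v k)) x = P ((S k ∘L adjoint (S k)) (P x)) := by
      intro k
      rw [hvadj k, hv k]
      simp only [comp_apply]
      rw [hc' k (P x) (hP2 x)]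
    rw [ContinuousLinearMap.sum_apply]
    simp_rw [h1]
    rw [← map_sum, ← ContinuousLinearMap.sum_apply, hS.2]
    exact hP3 _ (hP2 x)
  refine ⟨ha, hb, hc, ?_, ?_⟩
  · intro I J
    have hJ : adjoint (cword v J) Ω = adjoint (cword S J) Ω := (key J Ω hΩK).1
    rw [hJ]
    rw [← adjoint_inner_left (cword S I), ← adjoint_inner_left (cword v I)]
    rw [(key I Ω hΩK).1]
  · have hsub : (Submodule.span ℂ
        {x : H | ∃ I J : List (Fin d), x = cword S I (adjoint (cword S J) Ω)} :
        Submodule ℂ H) ≤ Submodule.span ℂ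
        {x : H | ∃ (I : List (Fin d)) (ξ : H), ξ ∈ Ksub ∧ x = cword S I ξ} := by
      apply Submodule.span_mono
      rintro x ⟨I, J, rfl⟩
      exact ⟨I, adjoint (cword S J) Ω, hgen J, rfl⟩
    exact hcyc.mono hsub
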